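/- Let f : ℝⁿ → ℝ be a function and c ∈ ℝ. Let A be an n×n real diagonal matrix whose diagonal entries are positive and pairwise distinct, and assume that no element of X_c^{∞,+} is an eigenvector of A. Then there exist α, β ∈ (0,1), R > 0 and ε > 0 such that for every x ∈ ℝⁿ with ‖x‖ > R and |f(x) − c| < ε one has α < ⟨Ax/‖Ax‖, x/‖x‖⟩ < β. -/

import Mathlib

open Filter Topology
open scoped RealInnerProductSpace

noncomputable def matApply {n : ℕ} (A : Matrix (Fin n) (Fin n) ℝ)
    (x : EuclideanSpace ℝ (Fin n)) : EuclideanSpace ℝ (Fin n) :=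
  (EuclideanSpace.equiv (Fin n) ℝ).symm (A.mulVec (EuclideanSpace.equiv (Fin n) ℝ x))

def dirsAtInfinity {n : ℕ} (f : EuclideanSpace ℝ (Fin n) → ℝ) (c : ℝ) :
    Set (EuclideanSpace ℝ (Fin n)) :=
  {u | ‖u‖ = 1 ∧ ∃ x : ℕ → EuclideanSpace ℝ (Fin n),
    Tendsto (fun k => ‖x k‖) atTop atTop ∧
    Tendsto (fun k => (‖x k‖)⁻¹ • x k) atTop (𝓝 u) ∧
    Tendsto (fun k => f (x k)) atTop (𝓝 c)}

lemma matApply_smul {n : ℕ} (A : Matrix (Fin n) (Fin n) ℝ) (s : ℝ)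
    (x : EuclideanSpace ℝ (Fin n)) : matApply A (s • x) = s • matApply A x := by
  simp [matApply, Matrix.mulVec_smul]

lemma matApply_apply {n : ℕ} (d : Fin n → ℝ) (x : EuclideanSpace ℝ (Fin n)) (i : Fin n) :
    matApply (Matrix.diagonal d) x i = d i * x i := by
  simp [matApply, Matrix.mulVec_diagonal]

lemma continuous_matApply {n : ℕ} (A : Matrix (Fin n) (Fin n) ℝ) :
    Continuous (matApply A) := by
  unfold matApply
  exact (EuclideanSpace.equiv (Fin n) ℝ).symm.continuous.comp
    ((LinearMap.continuous_of_finiteDimensional A.mulVecLin).comp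
      (EuclideanSpace.equiv (Fin n) ℝ).continuous)

lemma inner_matApply {n : ℕ} (d : Fin n → ℝ) (x : EuclideanSpace ℝ (Fin n)) :
    ⟪matApply (Matrix.diagonal d) x, x⟫ = ∑ i, d i * (x i * x i) := by
  rw [PiLp.inner_apply]
  simp [matApply_apply, RCLike.inner_apply, mul_assoc]
  exact Finset.sum_congr rfl fun i _ => by ring

lemma inner_matApply_pos {n : ℕ} (d : Fin n → ℝ) (hd : ∀ i, 0 < d i)
    (x : EuclideanSpace ℝ (Fin n)) (hx : x ≠ 0) :
    0 < ⟪matApply (Matrix.diagonal d) x, x⟫ := by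
  rw [inner_matApply]
  obtain ⟨i, hi⟩ : ∃ i, x i ≠ 0 := by
    by_contra h; push_neg at h; exact hx (by ext i; simpa using h i)
  exact Finset.sum_pos' (fun j _ => mul_nonneg (hd j).le (mul_self_nonneg _))
    ⟨i, Finset.mem_univ i, mul_pos (hd i) (mul_self_pos.mpr hi)⟩

lemma matApply_ne_zero {n : ℕ} (d : Fin n → ℝ) (hd : ∀ i, 0 < d i)
    (x : EuclideanSpace ℝ (Fin n)) (hx : x ≠ 0) :
    matApply (Matrix.diagonal d) x ≠ 0 := by
  intro h
  have := inner_matApply_pos d hd x hx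
  rw [h, inner_zero_left] at this
  exact lt_irrefl 0 this

/-- Let `f : ℝⁿ → ℝ` and `c ∈ ℝ`.  Let `A` be a diagonal matrix with positive, pairwise
distinct diagonal entries such that no element of `X_c^{∞,+}` is an eigenvector of `A`.
Then there are `α, β ∈ (0,1)`, `R > 0` and `ε > 0` such that
`α < ⟨Ax/‖Ax‖, x/‖x‖⟩ < β` whenever `‖x‖ > R` and `|f(x) − c| < ε`. -/
theorem statement8 {n : ℕ} (f : EuclideanSpace ℝ (Fin n) → ℝ) (c : ℝ)
    (dvec : Fin n → ℝ) (hpos : ∀ i, 0 < dvec i) (hinj : Function.Injective dvec)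
    (heig : ∀ u ∈ dirsAtInfinity f c, ∀ t : ℝ,
      matApply (Matrix.diagonal dvec) u ≠ t • u) :
    ∃ α β : ℝ, α ∈ Set.Ioo (0:ℝ) 1 ∧ β ∈ Set.Ioo (0:ℝ) 1 ∧
      ∃ R > (0:ℝ), ∃ ε > (0:ℝ), ∀ x : EuclideanSpace ℝ (Fin n),
        R < ‖x‖ → |f x - c| < ε →
        α < ⟪(‖matApply (Matrix.diagonal dvec) x‖)⁻¹ • matApply (Matrix.diagonal dvec) x,
              (‖x‖)⁻¹ • x⟫ ∧
        ⟪(‖matApply (Matrix.diagonal dvec) x‖)⁻¹ • matApply (Matrix.diagonal dvec) x,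
              (‖x‖)⁻¹ • x⟫ < β := by
  by_contra hcon
  push_neg at hcon
  set M := Matrix.diagonal dvec with hM
  set G : EuclideanSpace ℝ (Fin n) → ℝ :=
    fun w => ⟪(‖matApply M w‖)⁻¹ • matApply M w, (‖w‖)⁻¹ • w⟫ with hGdef
  -- selection of a bad sequence
  have hsel : ∀ k : ℕ, ∃ x : EuclideanSpace ℝ (Fin n),
      ((k:ℝ)+1) < ‖x‖ ∧ |f x - c| < ((k:ℝ)+1)⁻¹ ∧
      (G x ≤ ((k:ℝ)+2)⁻¹ ∨ 1 - ((k:ℝ)+2)⁻¹ ≤ G x) := by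
    intro k
    have h2 : (1:ℝ) < (k:ℝ)+2 := by
      have : (0:ℝ) ≤ (k:ℝ) := Nat.cast_nonneg k
      linarith
    have hi1 : ((k:ℝ)+2)⁻¹ < 1 := by
      rw [inv_lt_one_iff₀]; right; exact h2
    have hi0 : (0:ℝ) < ((k:ℝ)+2)⁻¹ := by positivity
    obtain ⟨x, hx1, hx2, hx3⟩ := hcon (((k:ℝ)+2)⁻¹) (1 - ((k:ℝ)+2)⁻¹)
      ⟨hi0, hi1⟩ ⟨by linarith, by linarith⟩ ((k:ℝ)+1) (by positivity)
      (((k:ℝ)+1)⁻¹) (by positivity)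
    refine ⟨x, hx1, hx2, ?_⟩
    by_cases h : ((k:ℝ)+2)⁻¹ < G x
    · right; exact hx3 h
    · left; exact le_of_not_gt h
  choose x hxR hxf hxG using hsel
  have hx0 : ∀ k, (0:ℝ) < ‖x k‖ := by
    intro k
    have : (0:ℝ) ≤ (k:ℝ) := Nat.cast_nonneg k
    linarith [hxR k]
  set u : ℕ → EuclideanSpace ℝ (Fin n) := fun k => (‖x k‖)⁻¹ • x k with hu
  have hunorm : ∀ k, ‖u k‖ = 1 := by
    intro k
    rw [hu]
    simp only [norm_smul, norm_inv, norm_norm]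
    exact inv_mul_cancel₀ (hx0 k).ne'
  have husph : ∀ k, u k ∈ Metric.sphere (0 : EuclideanSpace ℝ (Fin n)) 1 := by
    intro k; rw [mem_sphere_zero_iff_norm]; exact hunorm k
  obtain ⟨v, hvsph, φ, hφ, hconv⟩ :=
    (isCompact_sphere (0 : EuclideanSpace ℝ (Fin n)) 1).tendsto_subseq husph
  have hvnorm : ‖v‖ = 1 := mem_sphere_zero_iff_norm.mp hvsph
  have hv0 : v ≠ 0 := by
    intro h; rw [h, norm_zero] at hvnorm; exact one_ne_zero hvnorm.symm
  -- v ∈ dirsAtInfinity f c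
  have hnat : Tendsto (fun k : ℕ => (k:ℝ)+1) atTop atTop :=
    tendsto_atTop_add_const_right _ 1 tendsto_natCast_atTop_atTop
  have hvmem : v ∈ dirsAtInfinity f c := by
    refine ⟨hvnorm, fun k => x (φ k), ?_, ?_, ?_⟩
    · refine tendsto_atTop_mono (fun k => ?_) hnat
      have h1 : (k:ℝ) ≤ (φ k : ℝ) := by exact_mod_cast hφ.le_apply
      linarith [hxR (φ k)]
    · exact hconv
    · rw [tendsto_iff_dist_tendsto_zero]
      refine squeeze_zero (fun k => dist_nonneg) (fun k => ?_)
        (tendsto_inv_atTop_zero.comp hnat)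
      have h1 : (k:ℝ) ≤ (φ k : ℝ) := by exact_mod_cast hφ.le_apply
      have h2 : ((φ k : ℝ)+1)⁻¹ ≤ ((k:ℝ)+1)⁻¹ := by
        apply inv_anti₀ (by positivity) (by linarith)
      have := hxf (φ k)
      rw [Real.dist_eq]
      calc |f (x (φ k)) - c| ≤ ((φ k : ℝ)+1)⁻¹ := this.le
        _ ≤ ((k:ℝ)+1)⁻¹ := h2
  -- homogeneity of G
  have hGhom : ∀ k, G (x k) = G (u k) := by
    intro k
    have hA : matApply M (u k) = (‖x k‖)⁻¹ • matApply M (x k) := matApply_smul _ _ _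
    have hn := (hx0 k).ne'
    rw [hGdef]
    simp only [hA, hunorm k, norm_smul, norm_inv, norm_norm, inv_one, one_smul]
    rw [smul_smul]
    have hs : (‖x k‖⁻¹ * ‖matApply M (x k)‖)⁻¹ * ‖x k‖⁻¹ = ‖matApply M (x k)‖⁻¹ := by
      rw [mul_inv, inv_inv, mul_right_comm, mul_inv_cancel₀ hn, one_mul]
    rw [hs]
  -- continuity of G at v
  have hAv : matApply M v ≠ 0 := matApply_ne_zero dvec hpos v hv0
  have hGcont : ContinuousAt G v := by
    rw [hGdef]
    have hc1 : ContinuousAt (fun w => matApply M w) v :=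
      (continuous_matApply M).continuousAt
    have hc2 : ContinuousAt (fun w => (‖matApply M w‖)⁻¹ • matApply M w) v :=
      (hc1.norm.inv₀ (norm_ne_zero_iff.mpr hAv)).smul hc1
    have hc3 : ContinuousAt (fun w : EuclideanSpace ℝ (Fin n) => (‖w‖)⁻¹ • w) v := by
      have : ‖v‖ ≠ 0 := by rw [hvnorm]; exact one_ne_zero
      exact (continuousAt_id.norm.inv₀ this).smul continuousAt_id
    exact hc2.inner hc3
  have hlim : Tendsto (fun k => G (u (φ k))) atTop (𝓝 (G v)) :=
    hGcont.tendsto.comp hconv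
  -- the disjunction along the subsequence
  have hd : ∀ k, G (u (φ k)) ≤ ((k:ℝ)+2)⁻¹ ∨ 1 - ((k:ℝ)+2)⁻¹ ≤ G (u (φ k)) := by
    intro k
    have h1 : (k:ℝ) ≤ (φ k : ℝ) := by exact_mod_cast hφ.le_apply
    have h2 : ((φ k : ℝ)+2)⁻¹ ≤ ((k:ℝ)+2)⁻¹ :=
      inv_anti₀ (by positivity) (by linarith)
    rcases hxG (φ k) with h | h
    · left; rw [← hGhom]; linarith
    · right; rw [← hGhom]; linarith
  have htend2 : Tendsto (fun k : ℕ => ((k:ℝ)+2)⁻¹) atTop (𝓝 0) :=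
    tendsto_inv_atTop_zero.comp (tendsto_atTop_add_const_right _ 2 tendsto_natCast_atTop_atTop)
  -- key value facts about G v
  have hGvE : G v = (‖matApply M v‖)⁻¹ * ⟪matApply M v, v⟫ := by
    rw [hGdef]
    simp only [hvnorm, inv_one, one_smul]
    rw [real_inner_smul_left]
  have hGvpos : 0 < G v := by
    rw [hGvE]
    exact mul_pos (inv_pos.mpr (norm_pos_iff.mpr hAv)) (inner_matApply_pos dvec hpos v hv0)
  rcases frequently_or_distrib.mp ((Filter.Eventually.of_forall (f := atTop) hd).frequently) with hf | hf
  · -- G v ≤ 0, contradiction with positivity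
    obtain ⟨ψ, hψ, hψP⟩ := extraction_of_frequently_atTop hf
    have hl2 : Tendsto (fun k => G (u (φ (ψ k)))) atTop (𝓝 (G v)) :=
      hlim.comp hψ.tendsto_atTop
    have hb : Tendsto (fun k : ℕ => ((ψ k:ℝ)+2)⁻¹) atTop (𝓝 0) :=
      htend2.comp hψ.tendsto_atTop
    have : G v ≤ 0 := le_of_tendsto_of_tendsto' hl2 hb (fun k => hψP k)
    linarith
  · -- G v ≥ 1, hence v is an eigenvector
    obtain ⟨ψ, hψ, hψP⟩ := extraction_of_frequently_atTop hf
    have hl2 : Tendsto (fun k => G (u (φ (ψ k)))) atTop (𝓝 (G v)) :=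
      hlim.comp hψ.tendsto_atTop
    have hb : Tendsto (fun k : ℕ => 1 - ((ψ k:ℝ)+2)⁻¹) atTop (𝓝 (1 - 0)) :=
      (tendsto_const_nhds.sub (htend2.comp hψ.tendsto_atTop))
    have hge : (1:ℝ) - 0 ≤ G v :=
      le_of_tendsto_of_tendsto' hb hl2 (fun k => hψP k)
    rw [sub_zero] at hge
    have hApos : 0 < ‖matApply M v‖ := norm_pos_iff.mpr hAv
    have h1 : ‖matApply M v‖ ≤ ⟪matApply M v, v⟫ := by
      rw [hGvE] at hge
      calc ‖matApply M v‖ = ‖matApply M v‖ * 1 := (mul_one _).symm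
        _ ≤ ‖matApply M v‖ * ((‖matApply M v‖)⁻¹ * ⟪matApply M v, v⟫) := by
            exact mul_le_mul_of_nonneg_left hge hApos.le
        _ = ⟪matApply M v, v⟫ := by field_simp
    have h2 : ⟪matApply M v, v⟫ ≤ ‖matApply M v‖ * ‖v‖ := real_inner_le_norm _ _
    rw [hvnorm, mul_one] at h2
    have heq : ⟪matApply M v, v⟫ = ‖matApply M v‖ * ‖v‖ := by
      rw [hvnorm, mul_one]; linarith
    have := inner_eq_norm_mul_iff_real.mp heq
    rw [hvnorm, one_smul] at this
    exact heig v hvmem (‖matApply M v‖) this
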